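/- Let r ≥ 1, let g₀ ∈ ℂ, let g : Fin r → ℂ satisfy gⱼ ≠ g₀ for all j, and let q : Fin r → ℝ satisfy ∑ⱼ qⱼ = 0 and ∑ⱼ qⱼ/(gⱼ − g₀) = 0. For each j set vⱼ := qⱼ • Im W(g₀, gⱼ), where W(g₀, gⱼ) := (gⱼ − g₀)⁻¹ • (1 − g₀gⱼ, √(−1)(1 + g₀gⱼ), g₀ + gⱼ) ∈ ℂ³. Assume moreover that for every j, vⱼ ≠ 0 and sⱼ := ⟨n(g₀) × n(gⱼ), vⱼ/‖vⱼ‖⟩ ≠ 0, where n(z) := (1 + |z|²)⁻¹ • (2 Re z, 2 Im z, |z|² − 1). Then ∑ⱼ ‖vⱼ‖ · (1 − ⟨n(g₀), n(gⱼ)⟩)/sⱼ = 0. -/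

import Mathlib

open scoped RealInnerProductSpace

/-- The vector `(x, y, z)` in Euclidean 3-space. -/
noncomputable def e3 (x y z : ℝ) : EuclideanSpace ℝ (Fin 3) :=
  (WithLp.equiv 2 _).symm ![x, y, z]

/-- The cross product in Euclidean 3-space. -/
noncomputable def cross3 (a b : EuclideanSpace ℝ (Fin 3)) : EuclideanSpace ℝ (Fin 3) :=
  e3 (a 1 * b 2 - a 2 * b 1) (a 2 * b 0 - a 0 * b 2) (a 0 * b 1 - a 1 * b 0)

/-- Inverse stereographic projection `n(z) = (1 + |z|²)⁻¹ (2 Re z, 2 Im z, |z|² - 1)`. -/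
noncomputable def invStereo (z : ℂ) : EuclideanSpace ℝ (Fin 3) :=
  (1 + ‖z‖ ^ 2)⁻¹ • e3 (2 * z.re) (2 * z.im) (‖z‖ ^ 2 - 1)

/-- The Weierstrass edge vector `W = (gⱼ - gᵢ)⁻¹ • (1 - gᵢgⱼ, √(-1)(1 + gᵢgⱼ), gᵢ + gⱼ) ∈ ℂ³`. -/
noncomputable def wVec (gi gj : ℂ) : Fin 3 → ℂ :=
  (gj - gi)⁻¹ • ![1 - gi * gj, Complex.I * (1 + gi * gj), gi + gj]

/-- Componentwise imaginary part of a vector in ℂ³, as a vector in ℝ³. -/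
noncomputable def imVec (W : Fin 3 → ℂ) : EuclideanSpace ℝ (Fin 3) :=
  e3 (W 0).im (W 1).im (W 2).im

/-- Componentwise real part of a vector in ℂ³, as a vector in ℝ³. -/
noncomputable def reVec (W : Fin 3 → ℂ) : EuclideanSpace ℝ (Fin 3) :=
  e3 (W 0).re (W 1).re (W 2).re



lemma e3_apply' (x y z : ℝ) (i : Fin 3) : e3 x y z i = ![x, y, z] i := rfl

lemma inner_e3' (x y z x' y' z' : ℝ) :
    ⟪e3 x y z, e3 x' y' z'⟫ = x * x' + y * y' + z * z' := by
  simp [e3, PiLp.inner_apply, Fin.sum_univ_three]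
  ring

set_option maxHeartbeats 2000000 in
lemma core_identity (a b : ℂ) (h : b ≠ a) :
    ⟪imVec (wVec a b), imVec (wVec a b)⟫ * (1 - ⟪invStereo a, invStereo b⟫)
      + ⟪cross3 (invStereo a) (invStereo b), imVec (wVec a b)⟫ = 0 := by
  have hd : ((b.re - a.re) * (b.re - a.re) + (b.im - a.im) * (b.im - a.im)) ≠ 0 := by
    intro hc
    apply h
    have h1 : b.re - a.re = 0 ∧ b.im - a.im = 0 := by
      constructor <;> nlinarith [sq_nonneg (b.re - a.re), sq_nonneg (b.im - a.im)]
    apply Complex.ext <;> [linarith [h1.1]; linarith [h1.2]]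
  have ha : (1 + (a.re * a.re + a.im * a.im)) ≠ 0 := by
    nlinarith [mul_self_nonneg a.re, mul_self_nonneg a.im]
  have hb : (1 + (b.re * b.re + b.im * b.im)) ≠ 0 := by
    nlinarith [mul_self_nonneg b.re, mul_self_nonneg b.im]
  simp only [imVec, wVec, invStereo, cross3, Pi.smul_apply, Matrix.cons_val_zero,
    Matrix.cons_val_one, Matrix.head_cons, Matrix.cons_val_two, Matrix.tail_cons,
    smul_eq_mul, PiLp.smul_apply, e3_apply', real_inner_smul_left, real_inner_smul_right,
    inner_e3', Complex.mul_im, Complex.mul_re, Complex.inv_im, Complex.inv_re,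
    Complex.sub_re, Complex.sub_im, Complex.add_re, Complex.add_im, Complex.one_re,
    Complex.one_im, Complex.I_re, Complex.I_im, Complex.sq_norm, Complex.normSq_apply]
  set p := a.re; set P := a.im; set u := b.re; set U := b.im
  clear_value p P u U
  field_simp
  ring

/-- Vanishing of the integrated mean curvature `H = ½ ∑ ℓⱼ tan(αⱼ/2)` of the dual face produced
by the discrete Weierstrass representation, with `tan(αⱼ/2) = (1 − cos αⱼ)/sin αⱼ`. -/
theorem stmt_5 (r : ℕ) (hr : 1 ≤ r) (g₀ : ℂ) (g : Fin r → ℂ) (hg : ∀ j, g j ≠ g₀)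
    (q : Fin r → ℝ)
    (hq1 : ∑ j, q j = 0) (hq2 : ∑ j, (q j : ℂ) / (g j - g₀) = 0)
    (v : Fin r → EuclideanSpace ℝ (Fin 3))
    (hv : ∀ j, v j = q j • imVec (wVec g₀ (g j)))
    (hv0 : ∀ j, v j ≠ 0)
    (s : Fin r → ℝ)
    (hs : ∀ j, s j = ⟪cross3 (invStereo g₀) (invStereo (g j)), ‖v j‖⁻¹ • v j⟫)
    (hs0 : ∀ j, s j ≠ 0) :
    ∑ j, ‖v j‖ * (1 - ⟪invStereo g₀, invStereo (g j)⟫) / s j = 0 := by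
  have key : ∀ j, ‖v j‖ * (1 - ⟪invStereo g₀, invStereo (g j)⟫) / s j = -(q j) := by
    intro j
    set I := imVec (wVec g₀ (g j)) with hI
    set cr := cross3 (invStereo g₀) (invStereo (g j)) with hcr
    have hvne : ‖v j‖ ≠ 0 := norm_ne_zero_iff.mpr (hv0 j)
    have hIc := core_identity g₀ (g j) (hg j)
    have hn : ‖v j‖ * ‖v j‖ = q j ^ 2 * ⟪I, I⟫ := by
      rw [← real_inner_self_eq_norm_mul_norm, hv j, real_inner_smul_left,
        real_inner_smul_right]
      ring
    have h2 : ‖v j‖ * s j = q j * ⟪cr, I⟫ := by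
      rw [hs j, real_inner_smul_right, hv j, real_inner_smul_right]
      rw [← hv j]
      field_simp
      rfl
    rw [div_eq_iff (hs0 j)]
    apply mul_left_cancel₀ hvne
    linear_combination (1 - ⟪invStereo g₀, invStereo (g j)⟫) * hn + q j * h2
      + q j ^ 2 * hIc
  calc ∑ j, ‖v j‖ * (1 - ⟪invStereo g₀, invStereo (g j)⟫) / s j
      = ∑ j, -(q j) := Finset.sum_congr rfl fun j _ => key j
    _ = -∑ j, q j := by rw [Finset.sum_neg_distrib]
    _ = 0 := by rw [hq1, neg_zero]
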